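/- Let p, q : ℝ → ℝ be integrable and compactly supported. Then there exists a constant C > 0 such that for every twice continuously differentiable compactly supported function y : ℝ → ℂ: |−∫_ℝ p(x)|y′(x)|² dx + ∫_ℝ q(x)|y(x)|² dx| ≤ (1/2)·∫_ℝ |y″(x)|² dx + C·∫_ℝ |y(x)|² dx. -/

import Mathlib

open MeasureTheory

private lemma integral_deriv_eq_zero'' {E : Type*} [NormedAddCommGroup E] [NormedSpace ℝ E]
    [CompleteSpace E] {f : ℝ → E} (hf : ContDiff ℝ 1 f) (hc : HasCompactSupport f) :
    ∫ x : ℝ, deriv f x = 0 := by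
  have hi : Integrable (deriv f) :=
    (hf.continuous_deriv le_rfl).integrable_of_hasCompactSupport hc.deriv
  have h1 := hc.integral_Iic_deriv_eq hf 0
  have h2 := hc.integral_Ioi_deriv_eq hf 0
  have h3 := intervalIntegral.integral_Iic_add_Ioi (b := (0:ℝ)) (f := deriv f) (μ := volume)
    hi.integrableOn hi.integrableOn
  rw [h1, h2] at h3
  rw [← h3]; abel

private lemma sq_cs' {f : ℝ → ℂ} (hfc : HasCompactSupport f) :
    HasCompactSupport (fun x => ‖f x‖ ^ 2) :=
  hfc.comp_left (g := fun z : ℂ => ‖z‖ ^ 2) (by simp)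

private lemma weight_le' (p : ℝ → ℝ) (hp : Integrable p) (g : ℝ → ℝ) (hg0 : ∀ x, 0 ≤ g x)
    (M : ℝ) (hM : ∀ x, g x ≤ M) :
    |∫ x, p x * g x| ≤ (∫ x, |p x|) * M := by
  rw [← Real.norm_eq_abs]
  calc ‖∫ x, p x * g x‖ ≤ ∫ x, |p x| * M := by
        refine norm_integral_le_of_norm_le (hp.abs.mul_const M) (.of_forall fun x => ?_)
        rw [Real.norm_eq_abs, abs_mul, abs_of_nonneg (hg0 x)]
        exact mul_le_mul_of_nonneg_left (hM x) (abs_nonneg _)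
    _ = (∫ x, |p x|) * M := integral_mul_const _ _

private lemma young_int' (f g : ℝ → ℂ) (hf : Continuous f) (hg : Continuous g)
    (hfc : HasCompactSupport f) (hgc : HasCompactSupport g)
    (ε δ : ℝ) (hε : 0 < ε) (hδ : 0 < δ) (h : 1 ≤ 4 * ε * δ) :
    ∫ x, ‖f x‖ * ‖g x‖ ≤ ε * (∫ x, ‖f x‖ ^ 2) + δ * ∫ x, ‖g x‖ ^ 2 := by
  have int1 : Integrable (fun x => ‖f x‖ * ‖g x‖) :=
    (hf.norm.mul hg.norm).integrable_of_hasCompactSupport hfc.norm.mul_right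
  have int2 : Integrable (fun x => ‖f x‖ ^ 2) :=
    (hf.norm.pow 2).integrable_of_hasCompactSupport (sq_cs' hfc)
  have int3 : Integrable (fun x => ‖g x‖ ^ 2) :=
    (hg.norm.pow 2).integrable_of_hasCompactSupport (sq_cs' hgc)
  have key : ∫ x, ‖f x‖ * ‖g x‖ ≤ ∫ x, (ε * ‖f x‖ ^ 2 + δ * ‖g x‖ ^ 2) := by
    refine integral_mono int1 ((int2.const_mul ε).add (int3.const_mul δ)) fun x => ?_
    nlinarith [sq_nonneg (2 * ε * ‖f x‖ - ‖g x‖), norm_nonneg (f x), norm_nonneg (g x),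
      mul_nonneg (by nlinarith : (0:ℝ) ≤ 4 * ε * δ - 1) (sq_nonneg ‖g x‖), hε.le]
  rw [integral_add (int2.const_mul ε) (int3.const_mul δ), integral_const_mul,
    integral_const_mul] at key
  exact key

private lemma sup_sq_le' (f : ℝ → ℂ) (hf : ContDiff ℝ 1 f) (hc : HasCompactSupport f) (x : ℝ) :
    ‖f x‖ ^ 2 ≤ 2 * ∫ u, ‖f u‖ * ‖deriv f u‖ := by
  have hd : ∀ u, HasDerivAt (fun u => ‖f u‖ ^ 2) (2 * (inner ℝ (f u) (deriv f u) : ℝ)) u :=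
    fun u => ((hf.differentiable one_ne_zero u).hasDerivAt).norm_sq
  have hg : ContDiff ℝ 1 (fun u => ‖f u‖ ^ 2) := hf.norm_sq ℝ
  have hcg : HasCompactSupport (fun u => ‖f u‖ ^ 2) := sq_cs' hc
  have key := hcg.integral_Iic_deriv_eq hg x
  have hcont1 : Continuous fun u => ‖f u‖ * ‖deriv f u‖ :=
    hf.continuous.norm.mul (hf.continuous_deriv le_rfl).norm
  have hint1 : Integrable fun u => ‖f u‖ * ‖deriv f u‖ :=
    hcont1.integrable_of_hasCompactSupport hc.norm.mul_right
  have hint2 : Integrable (deriv fun u => ‖f u‖ ^ 2) :=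
    (hg.continuous_deriv le_rfl).integrable_of_hasCompactSupport hcg.deriv
  have step1 : ‖f x‖ ^ 2 ≤ ∫ u in Set.Iic x, 2 * (‖f u‖ * ‖deriv f u‖) := by
    rw [← key]
    refine setIntegral_mono_on hint2.integrableOn ((hint1.const_mul 2).integrableOn)
      measurableSet_Iic fun u _ => ?_
    rw [(hd u).deriv]
    have := real_inner_le_norm (f u) (deriv f u)
    linarith
  have step2 : ∫ u in Set.Iic x, 2 * (‖f u‖ * ‖deriv f u‖) ≤ ∫ u, 2 * (‖f u‖ * ‖deriv f u‖) :=
    setIntegral_le_integral (hint1.const_mul 2) (.of_forall fun u => by positivity)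
  have heq : (∫ u, 2 * (‖f u‖ * ‖deriv f u‖)) = 2 * ∫ u, ‖f u‖ * ‖deriv f u‖ :=
    integral_const_mul 2 _
  linarith

private lemma deriv_sq_le' (y : ℝ → ℂ) (hy : ContDiff ℝ 2 y) (hc : HasCompactSupport y) :
    ∫ u, ‖deriv y u‖ ^ 2 ≤ ∫ u, ‖y u‖ * ‖deriv (deriv y) u‖ := by
  have hy1 : ContDiff ℝ 1 y := hy.of_le (by norm_num)
  have hy' : ContDiff ℝ (1 + 1) y := by
    rw [show ((1:WithTop ℕ∞) + 1) = 2 by norm_num]; exact hy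
  have hdy : ContDiff ℝ 1 (deriv y) := (contDiff_succ_iff_deriv.mp hy').2.2
  have hdyc : HasCompactSupport (deriv y) := hc.deriv
  set φ : ℝ → ℝ := fun u => (inner ℝ (y u) (deriv y u) : ℝ) with hφdef
  have hφd : ∀ u, HasDerivAt φ
      ((inner ℝ (y u) (deriv (deriv y) u) : ℝ) + (inner ℝ (deriv y u) (deriv y u) : ℝ)) u :=
    fun u => HasDerivAt.inner ℝ ((hy1.differentiable one_ne_zero u).hasDerivAt)
      ((hdy.differentiable one_ne_zero u).hasDerivAt)
  have hφ : ContDiff ℝ 1 φ := hy1.inner ℝ hdy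
  have hφc : HasCompactSupport φ := by
    refine hc.mono fun u hu => ?_
    simp only [Function.mem_support, ne_eq] at hu ⊢
    intro h0
    exact hu (by simp [hφdef, h0])
  have hzero : ∫ u : ℝ, deriv φ u = 0 := integral_deriv_eq_zero'' hφ hφc
  have hderiv_eq : (deriv φ) = fun u =>
      (inner ℝ (y u) (deriv (deriv y) u) : ℝ) + ‖deriv y u‖ ^ 2 := by
    funext u
    rw [(hφd u).deriv, real_inner_self_eq_norm_sq]
  have cy := hy1.continuous
  have cdy := hdy.continuous
  have cddy := hdy.continuous_deriv le_rfl
  have int1 : Integrable (fun u => (inner ℝ (y u) (deriv (deriv y) u) : ℝ)) := by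
    refine (cy.inner cddy).integrable_of_hasCompactSupport ?_
    refine hc.mono fun u hu => ?_
    simp only [Function.mem_support, ne_eq] at hu ⊢
    intro h0; exact hu (by simp [h0])
  have int2 : Integrable (fun u => ‖deriv y u‖ ^ 2) :=
    (cdy.norm.pow 2).integrable_of_hasCompactSupport (sq_cs' hdyc)
  have int3 : Integrable (fun u => ‖y u‖ * ‖deriv (deriv y) u‖) :=
    (cy.norm.mul cddy.norm).integrable_of_hasCompactSupport hc.norm.mul_right
  rw [hderiv_eq, integral_add int1 int2] at hzero
  have hle : ∫ u, -(inner ℝ (y u) (deriv (deriv y) u) : ℝ) ≤ ∫ u, ‖y u‖ * ‖deriv (deriv y) u‖ := by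
    refine integral_mono int1.neg int3 fun u => ?_
    have h1 := abs_real_inner_le_norm (y u) (deriv (deriv y) u)
    have h2 := neg_abs_le ((inner ℝ (y u) (deriv (deriv y) u) : ℝ))
    simp only [Pi.neg_apply]
    linarith
  rw [integral_neg] at hle
  linarith

set_option maxHeartbeats 1000000 in
/-- Form-boundedness of the perturbation `V = 2∂p∂ + q` relative to `H₀ = d⁴/dx⁴`:
for integrable compactly supported `p, q` there is `C > 0` such that for every `C²`
compactly supported `y : ℝ → ℂ`,
`|−∫ p|y′|² + ∫ q|y|²| ≤ (1/2)∫|y″|² + C∫|y|²`. -/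
theorem form_boundedness (p q : ℝ → ℝ)
    (hp : Integrable p) (hq : Integrable q)
    (hpc : HasCompactSupport p) (hqc : HasCompactSupport q) :
    ∃ C > (0 : ℝ), ∀ y : ℝ → ℂ, ContDiff ℝ 2 y → HasCompactSupport y →
      |(-∫ x : ℝ, p x * ‖deriv y x‖ ^ 2) + ∫ x : ℝ, q x * ‖y x‖ ^ 2|
        ≤ (1 / 2) * (∫ x : ℝ, ‖deriv (deriv y) x‖ ^ 2)
          + C * ∫ x : ℝ, ‖y x‖ ^ 2 := by
  set P := ∫ x, |p x| with hPdef
  set Q := ∫ x, |q x| with hQdef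
  have hP0 : 0 ≤ P := integral_nonneg fun x => abs_nonneg _
  have hQ0 : 0 ≤ Q := integral_nonneg fun x => abs_nonneg _
  set K := P + Q + 1 with hKdef
  have hK0 : (0:ℝ) < K := by linarith
  set L := 8 * K ^ 2 + K with hLdef
  have hL0 : (0:ℝ) < L := by nlinarith
  refine ⟨K + L ^ 2 + 1, by nlinarith [sq_nonneg L], ?_⟩
  intro y hy hyc
  have hy1 : ContDiff ℝ 1 y := hy.of_le (by norm_num)
  have hy' : ContDiff ℝ (1 + 1) y := by
    rw [show ((1:WithTop ℕ∞) + 1) = 2 by norm_num]; exact hy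
  have hdy : ContDiff ℝ 1 (deriv y) := (contDiff_succ_iff_deriv.mp hy').2.2
  have hdyc : HasCompactSupport (deriv y) := hyc.deriv
  have hddyc : HasCompactSupport (deriv (deriv y)) := hdyc.deriv
  have cy := hy1.continuous
  have cdy := hdy.continuous
  have cddy := hdy.continuous_deriv le_rfl
  set A := ∫ x, ‖y x‖ ^ 2 with hAdef
  set B := ∫ x, ‖deriv y x‖ ^ 2 with hBdef
  set D := ∫ x, ‖deriv (deriv y) x‖ ^ 2 with hDdef
  set I1 := ∫ x, ‖y x‖ * ‖deriv y x‖ with hI1def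
  set I2 := ∫ x, ‖deriv y x‖ * ‖deriv (deriv y) x‖ with hI2def
  have hA0 : 0 ≤ A := integral_nonneg fun x => by positivity
  have hB0 : 0 ≤ B := integral_nonneg fun x => by positivity
  have hD0 : 0 ≤ D := integral_nonneg fun x => by positivity
  have hI10 : 0 ≤ I1 := integral_nonneg fun x => by positivity
  have hI20 : 0 ≤ I2 := integral_nonneg fun x => by positivity
  -- sup bounds
  have hsup1 : ∀ x, ‖y x‖ ^ 2 ≤ 2 * I1 := sup_sq_le' y hy1 hyc
  have hsup2 : ∀ x, ‖deriv y x‖ ^ 2 ≤ 2 * I2 := sup_sq_le' (deriv y) hdy hdyc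
  -- weighted bounds
  have hw1 : |∫ x, p x * ‖deriv y x‖ ^ 2| ≤ P * (2 * I2) :=
    weight_le' p hp _ (fun x => by positivity) _ hsup2
  have hw2 : |∫ x, q x * ‖y x‖ ^ 2| ≤ Q * (2 * I1) :=
    weight_le' q hq _ (fun x => by positivity) _ hsup1
  -- interpolation inequalities
  have hI2b : I2 ≤ (4 * K) * B + (1 / (16 * K)) * D :=
    young_int' (deriv y) (deriv (deriv y)) cdy cddy hdyc hddyc _ _
      (by positivity) (by positivity) (le_of_eq (by field_simp; ring))
  have hI1b : I1 ≤ (1 / 2) * A + (1 / 2) * B :=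
    young_int' y (deriv y) cy cdy hyc hdyc _ _ (by norm_num) (by norm_num) (by norm_num)
  have hBb : B ≤ L * A + (1 / (4 * L)) * D :=
    (deriv_sq_le' y hy hyc).trans
      (young_int' y (deriv (deriv y)) cy cddy hyc hddyc _ _ hL0
        (by positivity) (le_of_eq (by field_simp)))
  -- arithmetic assembly
  have tri : |(-∫ x : ℝ, p x * ‖deriv y x‖ ^ 2) + ∫ x : ℝ, q x * ‖y x‖ ^ 2|
      ≤ |∫ x : ℝ, p x * ‖deriv y x‖ ^ 2| + |∫ x : ℝ, q x * ‖y x‖ ^ 2| := by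
    calc |(-∫ x : ℝ, p x * ‖deriv y x‖ ^ 2) + ∫ x : ℝ, q x * ‖y x‖ ^ 2|
        ≤ |(-∫ x : ℝ, p x * ‖deriv y x‖ ^ 2)| + |∫ x : ℝ, q x * ‖y x‖ ^ 2| := abs_add_le _ _
      _ = |∫ x : ℝ, p x * ‖deriv y x‖ ^ 2| + |∫ x : ℝ, q x * ‖y x‖ ^ 2| := by rw [abs_neg]
  have s1 : P * (2 * I2) ≤ 2 * K * I2 := by nlinarith
  have s2 : Q * (2 * I1) ≤ 2 * K * I1 := by nlinarith
  have s3 : 2 * K * I2 ≤ 2 * K * ((4 * K) * B + (1 / (16 * K)) * D) :=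
    mul_le_mul_of_nonneg_left hI2b (by linarith)
  have s4 : 2 * K * ((4 * K) * B + (1 / (16 * K)) * D) = 8 * K ^ 2 * B + D / 8 := by
    field_simp; ring
  have s5 : 2 * K * I1 ≤ 2 * K * ((1 / 2) * A + (1 / 2) * B) :=
    mul_le_mul_of_nonneg_left hI1b (by linarith)
  have s6 : 2 * K * ((1 / 2) * A + (1 / 2) * B) = K * A + K * B := by ring
  have s7 : L * B ≤ L * (L * A + (1 / (4 * L)) * D) :=
    mul_le_mul_of_nonneg_left hBb (by linarith)
  have s8 : L * (L * A + (1 / (4 * L)) * D) = L ^ 2 * A + D / 4 := by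
    field_simp
  have s9 : L * B = 8 * K ^ 2 * B + K * B := by rw [hLdef]; ring
  have s10 : (K + L ^ 2 + 1) * A = K * A + L ^ 2 * A + A := by ring
  clear_value P Q K L A B D I1 I2
  linarith
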